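/- Let n ≥ 4 be even, A = diag(a_1,...,a_n) with a_i > 0, and x, y ∈ ℝ^n with Ax ≠ Ay. Then for every t with |t| < 1, (ω_{n−2}/ω_{n−1}) ∫_{−1}^{1} (1−s²)^{(n−3)/2} Φ^{(n−2)}( 2|Ax − Ay| (t − s) ) ds = (−1)^{(n−2)/2} (π ω_{n−2} (n−2)!/2^{n−2}) G_n(Ax, Ay), where Φ(s) = log|s| (so Φ^{(n−2)} is its (n−2)-fold distributional derivative) and G_n(u,v) = |u−v|^{2−n}/(ω_{n−1}(2−n)). -/

import Mathlib

open MeasureTheory Filter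

/-- Multiplication by the diagonal matrix `A = diag (a 1, …, a n)`. -/
def diagMul {n : ℕ} (a : Fin n → ℝ) (x : EuclideanSpace ℝ (Fin n)) :
    EuclideanSpace ℝ (Fin n) := WithLp.toLp 2 (fun i => a i * x i)

/-- `ω_k`, the total surface measure of the unit sphere `S^k ⊆ ℝ^{k+1}`. -/
noncomputable def sphereVol (k : ℕ) : ℝ :=
  ((volume : Measure (EuclideanSpace ℝ (Fin (k + 1)))).toSphere Set.univ).toReal

/-- The fundamental solution of the Laplacian in `ℝ^n` for `n > 2`. -/
noncomputable def fundSol (n : ℕ) (u v : EuclideanSpace ℝ (Fin n)) : ℝ :=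
  ‖u - v‖ ^ ((2 : ℤ) - n) / (sphereVol (n - 1) * ((2 : ℝ) - n))

/-- The Hilbert transform as a principal-value limit. -/
noncomputable def hilbert (g : ℝ → ℝ) (t : ℝ) : ℝ :=
  limUnder (nhdsWithin 0 (Set.Ioi 0))
    (fun ε : ℝ => (1 / Real.pi) * ∫ s in {s : ℝ | ε < |t - s|}, g s / (t - s))

section AuxStmt13
open Set Real

noncomputable def wfun (j : ℕ) (s : ℝ) : ℝ := (1 - s^2) ^ ((j:ℝ) - 1/2)

lemma one_sub_sq_pos {s : ℝ} (hs : s ∈ Ioo (-1:ℝ) 1) : 0 < 1 - s^2 := by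
  simp only [mem_Ioo] at hs; nlinarith [hs.1, hs.2]

lemma wfun_cont (j : ℕ) : ContinuousOn (wfun j) (Ioo (-1:ℝ) 1) := by
  apply ContinuousOn.rpow_const
  · fun_prop
  · intro s hs; left; exact (one_sub_sq_pos hs).ne'

lemma wfun_zero_eq {s : ℝ} (hs : s ∈ Ioo (-1:ℝ) 1) :
    wfun 0 s = 1 / Real.sqrt (1 - s^2) := by
  have h := one_sub_sq_pos hs
  rw [wfun, Real.sqrt_eq_rpow, show ((0:ℕ):ℝ) - 1/2 = -(1/2) by norm_num,
    Real.rpow_neg h.le]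
  norm_num

lemma integrableOn_wfun_zero : IntegrableOn (wfun 0) (Ioo (-1:ℝ) 1) volume := by
  have h1 : IntegrableOn (fun s : ℝ => (1 - s) ^ (-(1:ℝ)/2)) (Ioo (-1:ℝ) 1) volume := by
    have := (intervalIntegral.intervalIntegrable_rpow' (a := 0) (b := 2)
      (r := -(1:ℝ)/2) (by norm_num)).comp_sub_left 1
    rw [intervalIntegrable_iff] at this
    apply this.mono_set
    rw [Set.uIoc_comm, Set.uIoc_of_le (by norm_num : (1:ℝ) - 2 ≤ 1 - 0)]
    intro s hs; simp only [mem_Ioo, mem_Ioc] at *; constructor <;> linarith [hs.1, hs.2]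
  have h2 : IntegrableOn (fun s : ℝ => (1 + s) ^ (-(1:ℝ)/2)) (Ioo (-1:ℝ) 1) volume := by
    have := (intervalIntegral.intervalIntegrable_rpow' (a := 0) (b := 2)
      (r := -(1:ℝ)/2) (by norm_num)).comp_sub_right (-1)
    rw [intervalIntegrable_iff] at this
    apply (this.mono_set _).congr_fun (fun s _ => by ring_nf) measurableSet_Ioo
    rw [Set.uIoc_of_le (by norm_num : (0:ℝ) + -1 ≤ 2 + -1)]
    intro s hs; simp only [mem_Ioo, mem_Ioc] at *; constructor <;> linarith [hs.1, hs.2]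
  apply Integrable.mono' (h1.add h2) ((wfun_cont 0).aestronglyMeasurable measurableSet_Ioo)
  · filter_upwards [ae_restrict_mem measurableSet_Ioo] with s hs
    have h := one_sub_sq_pos hs
    simp only [mem_Ioo] at hs
    have h1s : (0:ℝ) < 1 - s := by linarith [hs.2]
    have h2s : (0:ℝ) < 1 + s := by linarith [hs.1]
    have key : wfun 0 s = (1-s) ^ (-(1:ℝ)/2) * (1+s) ^ (-(1:ℝ)/2) := by
      rw [← Real.mul_rpow h1s.le h2s.le, show (1-s)*(1+s) = 1 - s^2 by ring, wfun]
      norm_num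
    rw [Real.norm_eq_abs, key, Pi.add_apply, abs_of_pos (by positivity)]
    rcases le_total s 0 with hs0 | hs0
    · have hb : (1-s) ^ (-(1:ℝ)/2) ≤ 1 :=
        Real.rpow_le_one_of_one_le_of_nonpos (by linarith) (by norm_num)
      nlinarith [Real.rpow_pos_of_pos h1s (-(1:ℝ)/2), Real.rpow_pos_of_pos h2s (-(1:ℝ)/2)]
    · have hb : (1+s) ^ (-(1:ℝ)/2) ≤ 1 :=
        Real.rpow_le_one_of_one_le_of_nonpos (by linarith) (by norm_num)
      nlinarith [Real.rpow_pos_of_pos h1s (-(1:ℝ)/2), Real.rpow_pos_of_pos h2s (-(1:ℝ)/2)]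

lemma integral_wfun_zero : ∫ s in Ioo (-1:ℝ) 1, wfun 0 s = Real.pi := by
  have hle : (-1:ℝ) ≤ 1 := by norm_num
  have hii : IntervalIntegrable (wfun 0) volume (-1) 1 := by
    rw [intervalIntegrable_iff_integrableOn_Ioo_of_le hle]; exact integrableOn_wfun_zero
  have := intervalIntegral.integral_eq_sub_of_hasDeriv_right_of_le hle
    (Real.continuous_arcsin.continuousOn) (fun x hx => ?_) hii
  · rw [intervalIntegral.integral_of_le hle, integral_Ioc_eq_integral_Ioo] at this
    rw [this, Real.arcsin_one, Real.arcsin_neg_one]; ring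
  · have hx' : x ∈ Ioo (-1:ℝ) 1 := hx
    rw [wfun_zero_eq hx']
    exact (Real.hasDerivAt_arcsin (by simp only [mem_Ioo] at hx'; linarith [hx'.1])
      (by simp only [mem_Ioo] at hx'; linarith [hx'.2])).hasDerivWithinAt

noncomputable def philt (j : ℕ) (τ s : ℝ) : ℝ := (wfun j s - wfun j τ) / (τ - s)

noncomputable def Iv (j : ℕ) : ℝ := ∫ s in Ioo (-1:ℝ) 1, wfun j s

noncomputable def Kv (j : ℕ) (τ : ℝ) : ℝ :=
  (∫ s in Ioo (-1:ℝ) 1, philt j τ s) + wfun j τ * Real.log ((1+τ)/(1-τ))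

lemma wfun_pos {j : ℕ} {s : ℝ} (hs : s ∈ Ioo (-1:ℝ) 1) : 0 < wfun j s :=
  Real.rpow_pos_of_pos (one_sub_sq_pos hs) _

lemma wfun_succ {j : ℕ} {s : ℝ} (hs : s ∈ Ioo (-1:ℝ) 1) :
    wfun (j+1) s = (1 - s^2) * wfun j s := by
  have h := one_sub_sq_pos hs
  rw [wfun, wfun, ← Real.rpow_one_add' (le_of_lt h)]
  · norm_num; ring_nf
  · intro hc; norm_num at hc; nlinarith [hc]

lemma wfun_le_wfun_zero {j : ℕ} {s : ℝ} (hs : s ∈ Ioo (-1:ℝ) 1) :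
    wfun j s ≤ wfun 0 s := by
  have h := one_sub_sq_pos hs
  apply Real.rpow_le_rpow_of_exponent_ge h (by nlinarith [sq_nonneg s])
  have : (0:ℝ) ≤ (j:ℝ) := Nat.cast_nonneg j
  push_cast; linarith

lemma integrableOn_wfun (j : ℕ) : IntegrableOn (wfun j) (Ioo (-1:ℝ) 1) volume := by
  apply Integrable.mono' integrableOn_wfun_zero
    ((wfun_cont j).aestronglyMeasurable measurableSet_Ioo)
  filter_upwards [ae_restrict_mem measurableSet_Ioo] with s hs
  rw [Real.norm_eq_abs, abs_of_pos (wfun_pos hs)]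
  exact wfun_le_wfun_zero hs

lemma ae_congr_off_singleton {f g : ℝ → ℝ} (τ : ℝ)
    (h : ∀ s ∈ Ioo (-1:ℝ) 1, s ≠ τ → f s = g s) :
    f =ᵐ[volume.restrict (Ioo (-1:ℝ) 1)] g := by
  apply (ae_restrict_iff' measurableSet_Ioo).2
  have hae : ∀ᵐ s : ℝ, s ≠ τ := by
    rw [ae_iff]
    convert Real.volume_singleton (a := τ) using 2
    ext s; simp
  filter_upwards [hae] with s hsne hmem
  exact h s hmem hsne

/-- the nonsingular form of `philt 0`. -/
noncomputable def bfun (τ s : ℝ) : ℝ :=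
  -(s+τ) / (Real.sqrt (1-τ^2) * Real.sqrt (1-s^2) *
    (Real.sqrt (1-τ^2) + Real.sqrt (1-s^2)))

lemma philt_zero_eq {τ s : ℝ} (hτ : τ ∈ Ioo (-1:ℝ) 1) (hs : s ∈ Ioo (-1:ℝ) 1)
    (hne : s ≠ τ) : philt 0 τ s = bfun τ s := by
  have hcp : 0 < Real.sqrt (1-τ^2) := Real.sqrt_pos.2 (one_sub_sq_pos hτ)
  have hdp : 0 < Real.sqrt (1-s^2) := Real.sqrt_pos.2 (one_sub_sq_pos hs)
  have hc2 : Real.sqrt (1-τ^2) ^ 2 = 1 - τ^2 := Real.sq_sqrt (one_sub_sq_pos hτ).le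
  have hd2 : Real.sqrt (1-s^2) ^ 2 = 1 - s^2 := Real.sq_sqrt (one_sub_sq_pos hs).le
  have hts : τ - s ≠ 0 := sub_ne_zero.2 (fun h => hne h.symm)
  rw [philt, bfun, wfun_zero_eq hs, wfun_zero_eq hτ]
  rw [div_eq_div_iff (by assumption) (by positivity)]
  field_simp
  nlinarith [hc2, hd2, hcp, hdp, mul_pos hcp hdp]

lemma bfun_cont {τ : ℝ} (hτ : τ ∈ Ioo (-1:ℝ) 1) :
    ContinuousOn (bfun τ) (Ioo (-1:ℝ) 1) := by
  have hcp : 0 < Real.sqrt (1-τ^2) := Real.sqrt_pos.2 (one_sub_sq_pos hτ)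
  apply ContinuousOn.div
  · fun_prop
  · fun_prop
  · intro s hs
    have hdp : 0 < Real.sqrt (1-s^2) := Real.sqrt_pos.2 (one_sub_sq_pos hs)
    positivity

lemma integrableOn_bfun {τ : ℝ} (hτ : τ ∈ Ioo (-1:ℝ) 1) :
    IntegrableOn (bfun τ) (Ioo (-1:ℝ) 1) volume := by
  have hcp : 0 < Real.sqrt (1-τ^2) := Real.sqrt_pos.2 (one_sub_sq_pos hτ)
  have hτ' := hτ
  simp only [mem_Ioo] at hτ'
  apply Integrable.mono'
    (g := fun s => (2 / Real.sqrt (1-τ^2)^2) * wfun 0 s)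
    (integrableOn_wfun_zero.const_mul _)
    ((bfun_cont hτ).aestronglyMeasurable measurableSet_Ioo)
  filter_upwards [ae_restrict_mem measurableSet_Ioo] with s hs
  have hs' := hs
  simp only [mem_Ioo] at hs'
  have hdp : 0 < Real.sqrt (1-s^2) := Real.sqrt_pos.2 (one_sub_sq_pos hs)
  have hden : 0 < Real.sqrt (1-τ^2) * Real.sqrt (1-s^2) *
      (Real.sqrt (1-τ^2) + Real.sqrt (1-s^2)) :=
    mul_pos (mul_pos hcp hdp) (by linarith)
  have hnum : |(-(s+τ))| ≤ 2 := by rw [abs_neg, abs_le]; constructor <;> linarith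
  have heq : 2 / Real.sqrt (1-τ^2)^2 * (1 / Real.sqrt (1-s^2))
      = 2 / (Real.sqrt (1-τ^2)^2 * Real.sqrt (1-s^2)) := by field_simp
  rw [Real.norm_eq_abs, bfun, abs_div, abs_of_pos hden, wfun_zero_eq hs, heq]
  apply div_le_div₀ (by positivity) hnum (by positivity)
  nlinarith [hcp, hdp]

lemma philt_succ {j : ℕ} {τ s : ℝ} (hτ : τ ∈ Ioo (-1:ℝ) 1) (hs : s ∈ Ioo (-1:ℝ) 1)
    (hne : s ≠ τ) :
    philt (j+1) τ s = (1-τ^2) * philt j τ s + (τ+s) * wfun j s := by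
  have hts : τ - s ≠ 0 := sub_ne_zero.2 (fun h => hne h.symm)
  rw [philt, philt, wfun_succ hs, wfun_succ hτ]
  field_simp
  ring

lemma integrableOn_mul_wfun (j : ℕ) (τ : ℝ) (hτ : τ ∈ Ioo (-1:ℝ) 1) :
    IntegrableOn (fun s => (τ+s) * wfun j s) (Ioo (-1:ℝ) 1) volume := by
  have hτ' := hτ; simp only [mem_Ioo] at hτ'
  apply Integrable.mono' (g := fun s => 2 * wfun j s)
    ((integrableOn_wfun j).const_mul _)
    (ContinuousOn.aestronglyMeasurable
      (((continuousOn_const (c := τ)).add continuousOn_id).mul (wfun_cont j))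
      measurableSet_Ioo)
  filter_upwards [ae_restrict_mem measurableSet_Ioo] with s hs
  have hs' := hs; simp only [mem_Ioo] at hs'
  simp only [Pi.add_apply, Pi.mul_apply, id_eq]
  rw [Real.norm_eq_abs, abs_mul, abs_of_pos (wfun_pos hs)]
  have : |τ + s| ≤ 2 := by rw [abs_le]; constructor <;> linarith
  exact mul_le_mul_of_nonneg_right this (wfun_pos hs).le

lemma integrableOn_philt (j : ℕ) {τ : ℝ} (hτ : τ ∈ Ioo (-1:ℝ) 1) :
    IntegrableOn (philt j τ) (Ioo (-1:ℝ) 1) volume := by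
  induction j with
  | zero =>
      exact (integrableOn_bfun hτ).congr
        (ae_congr_off_singleton τ fun s hs hne => (philt_zero_eq hτ hs hne).symm)
  | succ j ih =>
      have h1 : IntegrableOn (fun s => (1-τ^2) * philt j τ s + (τ+s) * wfun j s)
          (Ioo (-1:ℝ) 1) volume :=
        (ih.const_mul _).add (integrableOn_mul_wfun j τ hτ)
      exact h1.congr
        (ae_congr_off_singleton τ fun s hs hne => (philt_succ hτ hs hne).symm)

lemma wfun_even (j : ℕ) (s : ℝ) : wfun j (-s) = wfun j s := by
  simp [wfun, neg_sq]

lemma integral_odd_wfun (j : ℕ) : ∫ s in Ioo (-1:ℝ) 1, s * wfun j s = 0 := by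
  have h1 : ∫ s in Ioo (-1:ℝ) 1, s * wfun j s = ∫ s in (-1:ℝ)..1, s * wfun j s := by
    rw [intervalIntegral.integral_of_le (by norm_num : (-1:ℝ) ≤ 1),
      integral_Ioc_eq_integral_Ioo]
  have h2 : (∫ s in (-1:ℝ)..1, (-s) * wfun j (-s)) = ∫ s in (-1:ℝ)..1, s * wfun j s := by
    simpa using intervalIntegral.integral_comp_neg (a := (-1:ℝ)) (b := 1)
      (fun s => s * wfun j s)
  have h3 : (∫ s in (-1:ℝ)..1, (-s) * wfun j (-s)) = -∫ s in (-1:ℝ)..1, s * wfun j s := by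
    rw [← intervalIntegral.integral_neg]
    congr 1; ext s; rw [wfun_even]; ring
  rw [h1]; linarith [h2, h3.symm.trans h2]

lemma Kv_succ (j : ℕ) {τ : ℝ} (hτ : τ ∈ Ioo (-1:ℝ) 1) :
    Kv (j+1) τ = (1-τ^2) * Kv j τ + τ * Iv j := by
  have hint : ∫ s in Ioo (-1:ℝ) 1, philt (j+1) τ s
      = (1-τ^2) * (∫ s in Ioo (-1:ℝ) 1, philt j τ s) + τ * Iv j := by
    rw [integral_congr_ae (ae_congr_off_singleton τ fun s hs hne => philt_succ hτ hs hne)]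
    rw [integral_add ((integrableOn_philt j hτ).const_mul _) (integrableOn_mul_wfun j τ hτ),
      integral_const_mul]
    have : ∫ s in Ioo (-1:ℝ) 1, (τ+s) * wfun j s
        = τ * Iv j + ∫ s in Ioo (-1:ℝ) 1, s * wfun j s := by
      simp only [Iv]
      rw [← integral_const_mul, ← integral_add ((integrableOn_wfun j).const_mul _)]
      · congr 1; ext s; ring
      · apply ((integrableOn_wfun j).const_mul 2).mono' -- s * wfun j s integrable
        · exact ContinuousOn.aestronglyMeasurable
            ((continuousOn_id.mul (wfun_cont j))) measurableSet_Ioo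
        · filter_upwards [ae_restrict_mem measurableSet_Ioo] with s hs
          have hs' := hs; simp only [mem_Ioo] at hs'
          rw [Real.norm_eq_abs, abs_mul, abs_of_pos (wfun_pos hs)]
          nlinarith [wfun_pos (j := j) hs, abs_nonneg s, abs_lt.2 ⟨hs'.1, hs'.2⟩]
    rw [this, integral_odd_wfun]; ring
  rw [Kv, Kv, hint, wfun_succ hτ]; ring

lemma intervalIntegrable_bfun {τ : ℝ} (hτ : τ ∈ Ioo (-1:ℝ) 1) :
    IntervalIntegrable (bfun τ) volume (-1) 1 := by
  rw [intervalIntegrable_iff_integrableOn_Ioo_of_le (by norm_num : (-1:ℝ) ≤ 1)]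
  exact integrableOn_bfun hτ

lemma Kv_zero {τ : ℝ} (hτ : τ ∈ Ioo (-1:ℝ) 1) : Kv 0 τ = 0 := by
  have hτ' := hτ; simp only [mem_Ioo] at hτ'
  set c := Real.sqrt (1-τ^2) with hc
  have hcp : 0 < c := Real.sqrt_pos.2 (one_sub_sq_pos hτ)
  have hc2 : c ^ 2 = 1 - τ^2 := Real.sq_sqrt (one_sub_sq_pos hτ).le
  -- the antiderivative
  set F : ℝ → ℝ := fun s => c⁻¹ * Real.log (1 - τ*s + c * Real.sqrt (1-s^2)) with hF
  have hupos : ∀ s ∈ Icc (-1:ℝ) 1, 0 < 1 - τ*s + c * Real.sqrt (1-s^2) := by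
    intro s hs
    simp only [mem_Icc] at hs
    have h1 : τ * s < 1 := by
      nlinarith [mul_pos (show (0:ℝ) < 1 - τ by linarith [hτ'.2]) (show (0:ℝ) < 1 + τ by linarith [hτ'.1]),
        mul_nonneg (show (0:ℝ) ≤ 1 - s by linarith [hs.2]) (show (0:ℝ) ≤ 1 + s by linarith [hs.1]),
        sq_nonneg (τ - s), sq_nonneg (τ + s)]
    have h2 : 0 ≤ c * Real.sqrt (1-s^2) := by positivity
    linarith
  have hFcont : ContinuousOn F (Icc (-1:ℝ) 1) := by
    apply ContinuousOn.mul continuousOn_const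
    apply ContinuousOn.log
    · fun_prop
    · intro s hs; exact (hupos s hs).ne'
  have hFderiv : ∀ x ∈ Ioo (-1:ℝ) 1, HasDerivWithinAt F (bfun τ x) (Ioi x) x := by
    intro x hx
    have hx' := hx; simp only [mem_Ioo] at hx'
    have hdx : 0 < 1 - x^2 := one_sub_sq_pos hx
    set d := Real.sqrt (1-x^2) with hdd
    have hdp : 0 < d := Real.sqrt_pos.2 hdx
    have hd2 : d ^ 2 = 1 - x^2 := Real.sq_sqrt hdx.le
    have hu := hupos x (Ioo_subset_Icc_self hx)
    have h1 : HasDerivAt (fun s : ℝ => 1 - s^2) (-(2*x)) x := by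
      simpa using (hasDerivAt_pow 2 x).const_sub 1
    have h2 : HasDerivAt (fun s : ℝ => Real.sqrt (1-s^2)) (1/(2*d) * (-(2*x))) x :=
      (Real.hasDerivAt_sqrt hdx.ne').comp x h1
    have h3 : HasDerivAt (fun s : ℝ => 1 - τ*s + c * Real.sqrt (1-s^2))
        (-τ + c * (1/(2*d) * (-(2*x)))) x := by
      have h3a : HasDerivAt (fun s : ℝ => 1 - τ*s) (-τ) x := by
        simpa using ((hasDerivAt_id x).const_mul τ).const_sub 1
      exact h3a.add (h2.const_mul c)
    have h4 : HasDerivAt F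
        (c⁻¹ * ((1 - τ*x + c*d)⁻¹ * (-τ + c * (1/(2*d) * (-(2*x)))))) x := by
      exact ((Real.hasDerivAt_log hu.ne').comp x h3).const_mul c⁻¹
    have heq : c⁻¹ * ((1 - τ*x + c*d)⁻¹ * (-τ + c * (1/(2*d) * (-(2*x))))) = bfun τ x := by
      have hu' : (0:ℝ) < 1 - τ*x + c*d := hu
      rw [bfun, ← hc, ← hdd]
      rw [show (-τ + c * (1/(2*d) * (-(2*x)))) = -((τ*d + c*x)/d) by field_simp; ring]
      have key : (τ*d + c*x)*(c+d) = (x+τ)*(1 - τ*x + c*d) := by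
        linear_combination τ*hd2 + x*hc2
      field_simp
      linear_combination (-τ) * hd2 - x * hc2
    rw [← heq]
    exact h4.hasDerivWithinAt
  have hicc := intervalIntegral.integral_eq_sub_of_hasDeriv_right_of_le
    (by norm_num : (-1:ℝ) ≤ 1) hFcont hFderiv (intervalIntegrable_bfun hτ)
  have hF1 : F 1 = c⁻¹ * Real.log (1 - τ) := by
    simp only [hF]; norm_num
  have hFm1 : F (-1) = c⁻¹ * Real.log (1 + τ) := by
    simp only [hF]; norm_num
  have hint : ∫ s in Ioo (-1:ℝ) 1, philt 0 τ s
      = c⁻¹ * Real.log (1 - τ) - c⁻¹ * Real.log (1 + τ) := by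
    rw [integral_congr_ae (ae_congr_off_singleton τ fun s hs hne => philt_zero_eq hτ hs hne)]
    rw [← integral_Ioc_eq_integral_Ioo,
      ← intervalIntegral.integral_of_le (by norm_num : (-1:ℝ) ≤ 1), hicc, hF1, hFm1]
  rw [Kv, hint, wfun_zero_eq hτ, ← hc]
  rw [Real.log_div (by linarith) (by linarith)]
  field_simp
  ring

open Polynomial in
noncomputable def Pv : ℕ → Polynomial ℝ
  | 0 => 0
  | (j+1) => (1 - X^2) * Pv j + C (Iv j) * X

open Polynomial in
lemma Pv_succ (j : ℕ) : Pv (j+1) = (1 - X^2) * Pv j + C (Iv j) * X := rfl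

open Polynomial in
lemma Kv_eq_poly (j : ℕ) {τ : ℝ} (hτ : τ ∈ Ioo (-1:ℝ) 1) :
    Kv j τ = (Pv j).eval τ := by
  induction j with
  | zero => rw [Kv_zero hτ]; simp [Pv]
  | succ j ih => rw [Kv_succ j hτ, ih, Pv_succ]; simp; ring

open Polynomial in
lemma natDegree_one_sub_X_sq : ((1:ℝ[X]) - X^2).natDegree ≤ 2 := by
  apply le_trans (natDegree_sub_le _ _); simp

open Polynomial in
lemma Pv_degree (j : ℕ) : (Pv (j+1)).natDegree ≤ 2*j+1 := by
  induction j with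
  | zero =>
      rw [Pv_succ]
      apply le_trans (natDegree_add_le _ _)
      apply max_le
      · simp [Pv]
      · apply le_trans (natDegree_mul_le); simp [natDegree_X_le]
  | succ j ih =>
      rw [Pv_succ]
      apply le_trans (natDegree_add_le _ _)
      apply max_le
      · apply le_trans (natDegree_mul_le)
        have := natDegree_one_sub_X_sq
        omega
      · apply le_trans (natDegree_mul_le)
        simp [natDegree_X_le]

open Polynomial in
lemma Pv_coeff (j : ℕ) : (Pv (j+1)).coeff (2*j+1) = (-1)^j * Iv 0 := by
  induction j with
  | zero => simp [Pv]
  | succ j ih =>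
      have hc : (Pv (j+1)).coeff (2*j+3) = 0 :=
        coeff_eq_zero_of_natDegree_lt (lt_of_le_of_lt (Pv_degree j) (by omega))
      rw [Pv_succ]
      rw [coeff_add, sub_mul, one_mul, coeff_sub]
      rw [show 2*(j+1)+1 = (2*j+1) + 2 by ring, coeff_X_pow_mul]
      rw [show (2*j+1) + 2 = 2*j+3 by ring, hc, ih]
      have hx : ((C (Iv (j+1)) : ℝ[X]) * X).coeff (2*j+3) = 0 := by
        rw [coeff_C_mul, coeff_X]
        simp only [mul_eq_zero]
        right
        rw [if_neg (by omega)]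
      rw [show (2*j+3) = 2*(j+1)+1 by ring] at hx ⊢
      rw [hx]
      ring

open Polynomial in
lemma iteratedDeriv_polyeval (k : ℕ) (p : Polynomial ℝ) :
    iteratedDeriv k (fun x : ℝ => p.eval x) = fun x => (derivative^[k] p).eval x := by
  induction k generalizing p with
  | zero => simp
  | succ k ih =>
      rw [iteratedDeriv_succ', Function.iterate_succ_apply]
      rw [← ih (derivative p)]
      have hderiv : (deriv fun x : ℝ => p.eval x) = fun x => (derivative p).eval x := by
        funext x; exact Polynomial.deriv (𝕜 := ℝ) (p := p) (x := x)
      rw [hderiv]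

open Polynomial in
lemma iterate_derivative_Pv (j : ℕ) :
    derivative^[2*j+1] (Pv (j+1))
      = C (((2*j+1).factorial : ℝ) * ((-1)^j * Iv 0)) := by
  have h0 : (derivative^[2*j+1] (Pv (j+1))).natDegree ≤ 0 :=
    le_trans (natDegree_iterate_derivative _ _) (by have := Pv_degree j; omega)
  rw [eq_C_of_natDegree_le_zero h0, coeff_iterate_derivative]
  rw [show 0 + (2*j+1) = 2*j+1 by omega, Pv_coeff j, Nat.descFactorial_self]
  rw [nsmul_eq_mul]

noncomputable def gfun (M : ℕ) (s : ℝ) : ℝ := (max 0 (1 - s^2)) ^ ((M:ℝ) - 1/2)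

lemma gfun_eq_wfun {M : ℕ} {s : ℝ} (hs : s ∈ Ioo (-1:ℝ) 1) : gfun M s = wfun M s := by
  rw [gfun, wfun, max_eq_right (one_sub_sq_pos hs).le]

lemma gfun_exp_pos {M : ℕ} (hM : 1 ≤ M) : (0:ℝ) < (M:ℝ) - 1/2 := by
  have : (1:ℝ) ≤ (M:ℝ) := by exact_mod_cast hM
  linarith

lemma gfun_zero {M : ℕ} (hM : 1 ≤ M) {s : ℝ} (hs : s ∉ Ioo (-1:ℝ) 1) : gfun M s = 0 := by
  have h1 : max 0 (1 - s^2) = 0 := by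
    simp only [mem_Ioo, not_and_or, not_lt] at hs
    apply max_eq_left
    rcases hs with h | h <;> nlinarith
  rw [gfun, h1, Real.zero_rpow (gfun_exp_pos hM).ne']

lemma integral_inv_left {τ a b : ℝ} (hab : a ≤ b) (hb : b < τ) :
    ∫ s in Ioo a b, (τ - s)⁻¹ = Real.log (τ - a) - Real.log (τ - b) := by
  have hcont : ContinuousOn (fun s : ℝ => -Real.log (τ - s)) (Icc a b) := by
    apply ContinuousOn.neg
    apply ContinuousOn.log (by fun_prop)
    intro s hs
    simp only [mem_Icc] at hs
    have : 0 < τ - s := by linarith [hs.2]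
    exact this.ne'
  have hderiv : ∀ x ∈ Ioo a b, HasDerivWithinAt (fun s : ℝ => -Real.log (τ - s))
      ((τ - x)⁻¹) (Ioi x) x := by
    intro x hx
    simp only [mem_Ioo] at hx
    have hpos : 0 < τ - x := by linarith [hx.2]
    have h1 : HasDerivAt (fun s : ℝ => τ - s) (-1) x := by
      simpa using (hasDerivAt_id x).const_sub τ
    have h2 := ((Real.hasDerivAt_log hpos.ne').comp x h1).neg
    refine h2.hasDerivWithinAt.congr_deriv ?_
    field_simp
  have hii : IntervalIntegrable (fun s : ℝ => (τ - s)⁻¹) volume a b := by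
    apply ContinuousOn.intervalIntegrable
    apply ContinuousOn.inv₀ (by fun_prop)
    intro s hs
    rw [uIcc_of_le hab] at hs
    simp only [mem_Icc] at hs
    have : 0 < τ - s := by linarith [hs.2]
    exact this.ne'
  have := intervalIntegral.integral_eq_sub_of_hasDeriv_right_of_le hab hcont hderiv hii
  rw [intervalIntegral.integral_of_le hab, integral_Ioc_eq_integral_Ioo] at this
  rw [this]; ring

lemma integral_inv_right {τ a b : ℝ} (hab : a ≤ b) (ha : τ < a) :
    ∫ s in Ioo a b, (τ - s)⁻¹ = Real.log (a - τ) - Real.log (b - τ) := by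
  have hcont : ContinuousOn (fun s : ℝ => -Real.log (s - τ)) (Icc a b) := by
    apply ContinuousOn.neg
    apply ContinuousOn.log (by fun_prop)
    intro s hs
    simp only [mem_Icc] at hs
    have : 0 < s - τ := by linarith [hs.1]
    exact this.ne'
  have hderiv : ∀ x ∈ Ioo a b, HasDerivWithinAt (fun s : ℝ => -Real.log (s - τ))
      ((τ - x)⁻¹) (Ioi x) x := by
    intro x hx
    simp only [mem_Ioo] at hx
    have hpos : 0 < x - τ := by linarith [hx.1]
    have h1 : HasDerivAt (fun s : ℝ => s - τ) 1 x := by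
      simpa using (hasDerivAt_id x).sub_const τ
    have h2 := ((Real.hasDerivAt_log hpos.ne').comp x h1).neg
    refine h2.hasDerivWithinAt.congr_deriv ?_
    rw [show τ - x = -(x - τ) by ring, inv_neg]
    field_simp
  have hii : IntervalIntegrable (fun s : ℝ => (τ - s)⁻¹) volume a b := by
    apply ContinuousOn.intervalIntegrable
    apply ContinuousOn.inv₀ (by fun_prop)
    intro s hs
    rw [uIcc_of_le hab] at hs
    simp only [mem_Icc] at hs
    have : s - τ > 0 := by linarith [hs.1]
    intro hc; nlinarith
  have := intervalIntegral.integral_eq_sub_of_hasDeriv_right_of_le hab hcont hderiv hii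
  rw [intervalIntegral.integral_of_le hab, integral_Ioc_eq_integral_Ioo] at this
  rw [this]; ring

lemma tendsto_pv (M : ℕ) (hM : 1 ≤ M) {τ : ℝ} (hτ : τ ∈ Ioo (-1:ℝ) 1) :
    Tendsto (fun ε : ℝ => ∫ s in {s : ℝ | ε < |τ - s|}, gfun M s / (τ - s))
      (nhdsWithin 0 (Set.Ioi 0)) (nhds (Kv M τ)) := by
  have hτ' := hτ; simp only [mem_Ioo] at hτ'
  set δ : ℝ := min (1 - τ) (1 + τ) with hδdef
  have hδ : 0 < δ := lt_min (by linarith [hτ'.2]) (by linarith [hτ'.1])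
  set φ : ℝ → ℝ := philt M τ with hφ
  have hφint : IntegrableOn φ (Ioo (-1:ℝ) 1) volume := integrableOn_philt M hτ
  -- Step B : the regularised integrals converge
  have hB : Tendsto (fun ε : ℝ => ∫ s in Ioo (-1:ℝ) 1, ({s : ℝ | ε < |τ - s|}.indicator φ) s)
      (nhdsWithin 0 (Set.Ioi 0)) (nhds (∫ s in Ioo (-1:ℝ) 1, φ s)) := by
    apply tendsto_integral_filter_of_dominated_convergence (bound := fun s => ‖φ s‖)
    · apply Eventually.of_forall
      intro ε
      exact (hφint.aestronglyMeasurable).indicator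
        (measurableSet_lt measurable_const (by fun_prop))
    · apply Eventually.of_forall
      intro ε
      apply Eventually.of_forall
      intro s
      exact norm_indicator_le_norm_self φ s
    · exact hφint.norm
    · have hae : ∀ᵐ s : ℝ ∂(volume.restrict (Ioo (-1:ℝ) 1)), s ≠ τ := by
        apply ae_restrict_of_ae
        rw [ae_iff]
        convert Real.volume_singleton (a := τ) using 2
        ext s; simp
      filter_upwards [hae] with s hsne
      have habs : 0 < |τ - s| := abs_pos.2 (sub_ne_zero.2 (fun h => hsne h.symm))
      apply Tendsto.congr' _ tendsto_const_nhds
      filter_upwards [Ioo_mem_nhdsGT habs] with ε hε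
      exact (indicator_of_mem (by exact hε.2) φ).symm
  -- Step A : identification of the truncated integral
  have hA : ∀ᶠ ε in nhdsWithin (0:ℝ) (Set.Ioi 0),
      (∫ s in {s : ℝ | ε < |τ - s|}, gfun M s / (τ - s))
        = (∫ s in Ioo (-1:ℝ) 1, ({s : ℝ | ε < |τ - s|}.indicator φ) s)
          + wfun M τ * Real.log ((1+τ)/(1-τ)) := by
    filter_upwards [Ioo_mem_nhdsGT hδ] with ε hε
    obtain ⟨hε0, hεδ⟩ := hε
    have hδ1 : δ ≤ 1 - τ := min_le_left _ _
    have hδ2 : δ ≤ 1 + τ := min_le_right _ _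
    have hle1 : -1 < τ - ε := by linarith
    have hle2 : τ + ε < 1 := by linarith
    have hSmeas : MeasurableSet {s : ℝ | ε < |τ - s|} :=
      measurableSet_lt measurable_const (by fun_prop)
    have hSet : {s : ℝ | ε < |τ - s|} ∩ Ioo (-1:ℝ) 1
        = Ioo (-1) (τ-ε) ∪ Ioo (τ+ε) 1 := by
      ext s
      simp only [mem_inter_iff, mem_setOf_eq, mem_Ioo, mem_union]
      constructor
      · rintro ⟨habs, h1, h2⟩
        rcases lt_abs.1 habs with h | h
        · left; constructor <;> linarith
        · right; constructor <;> linarith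
      · rintro (⟨h1, h2⟩ | ⟨h1, h2⟩)
        · exact ⟨lt_abs.2 (Or.inl (by linarith)), by linarith, by linarith⟩
        · exact ⟨lt_abs.2 (Or.inr (by linarith)), by linarith, by linarith⟩
    have hgind : (fun s => gfun M s / (τ - s))
        = (Ioo (-1:ℝ) 1).indicator (fun s => gfun M s / (τ - s)) := by
      funext s
      by_cases hs : s ∈ Ioo (-1:ℝ) 1
      · rw [indicator_of_mem hs]
      · rw [indicator_of_notMem hs, gfun_zero hM hs, zero_div]
    have hsub1 : Ioo (-1:ℝ) (τ-ε) ⊆ Ioo (-1:ℝ) 1 := Ioo_subset_Ioo le_rfl (by linarith)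
    have hsub2 : Ioo (τ+ε) (1:ℝ) ⊆ Ioo (-1:ℝ) 1 := Ioo_subset_Ioo (by linarith) le_rfl
    have hcong : ∀ s ∈ Ioo (-1:ℝ) 1, s ≠ τ →
        gfun M s / (τ - s) = φ s + wfun M τ * (τ - s)⁻¹ := by
      intro s hs hne
      rw [gfun_eq_wfun hs, hφ, philt]
      have hts : τ - s ≠ 0 := sub_ne_zero.2 fun h => hne h.symm
      field_simp
      ring
    have hdisj : Disjoint (Ioo (-1:ℝ) (τ-ε)) (Ioo (τ+ε) (1:ℝ)) := by
      apply Set.disjoint_left.2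
      intro s h1 h2
      simp only [mem_Ioo] at h1 h2
      linarith [h1.2, h2.1]
    have hφ1 : IntegrableOn φ (Ioo (-1:ℝ) (τ-ε)) volume := hφint.mono_set hsub1
    have hφ2 : IntegrableOn φ (Ioo (τ+ε) (1:ℝ)) volume := hφint.mono_set hsub2
    have hLint1 : IntegrableOn (fun s : ℝ => (τ - s)⁻¹) (Ioo (-1:ℝ) (τ-ε)) volume := by
      apply (ContinuousOn.integrableOn_Icc _).mono_set Ioo_subset_Icc_self
      apply ContinuousOn.inv₀ (by fun_prop)
      intro s hs
      simp only [mem_Icc] at hs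
      have : 0 < τ - s := by linarith [hs.2]
      exact this.ne'
    have hLint2 : IntegrableOn (fun s : ℝ => (τ - s)⁻¹) (Ioo (τ+ε) (1:ℝ)) volume := by
      apply (ContinuousOn.integrableOn_Icc _).mono_set Ioo_subset_Icc_self
      apply ContinuousOn.inv₀ (by fun_prop)
      intro s hs
      simp only [mem_Icc] at hs
      have : 0 < s - τ := by linarith [hs.1]
      intro hc; nlinarith
    have hEq1 : ∫ s in {s : ℝ | ε < |τ - s|}, gfun M s / (τ - s)
        = ∫ s in Ioo (-1:ℝ) (τ-ε) ∪ Ioo (τ+ε) 1, gfun M s / (τ - s) := by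
      conv_lhs => rw [hgind]
      rw [setIntegral_indicator measurableSet_Ioo, hSet]
    have hucong : ∫ s in Ioo (-1:ℝ) (τ-ε) ∪ Ioo (τ+ε) 1, gfun M s / (τ - s)
        = ∫ s in Ioo (-1:ℝ) (τ-ε) ∪ Ioo (τ+ε) 1, (φ s + wfun M τ * (τ - s)⁻¹) := by
      apply setIntegral_congr_fun (measurableSet_Ioo.union measurableSet_Ioo)
      intro s hs
      rcases hs with hs | hs
      · exact hcong s (hsub1 hs) (by simp only [mem_Ioo] at hs; intro h; rw [h] at hs; linarith [hs.2])
      · exact hcong s (hsub2 hs) (by simp only [mem_Ioo] at hs; intro h; rw [h] at hs; linarith [hs.1])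
    have hAind : ∫ s in Ioo (-1:ℝ) 1, ({s : ℝ | ε < |τ - s|}.indicator φ) s
        = (∫ s in Ioo (-1:ℝ) (τ-ε), φ s) + ∫ s in Ioo (τ+ε) 1, φ s := by
      rw [setIntegral_indicator hSmeas, inter_comm, hSet,
        setIntegral_union hdisj measurableSet_Ioo hφ1 hφ2]
    have hi1 : IntegrableOn (fun s : ℝ => φ s + wfun M τ * (τ - s)⁻¹)
        (Ioo (-1:ℝ) (τ-ε)) volume := hφ1.add (hLint1.const_mul _)
    have hi2 : IntegrableOn (fun s : ℝ => φ s + wfun M τ * (τ - s)⁻¹)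
        (Ioo (τ+ε) (1:ℝ)) volume := hφ2.add (hLint2.const_mul _)
    rw [hEq1, hucong,
      setIntegral_union hdisj measurableSet_Ioo hi1 hi2,
      integral_add hφ1 (hLint1.const_mul _), integral_add hφ2 (hLint2.const_mul _),
      integral_const_mul, integral_const_mul,
      integral_inv_left (by linarith) (by linarith),
      integral_inv_right (by linarith) (by linarith), hAind]
    rw [show τ - (-1) = 1 + τ by ring, show τ - (τ - ε) = ε by ring,
      show τ + ε - τ = ε by ring, show (1:ℝ) - τ = 1 - τ by ring]
    rw [Real.log_div (by linarith) (by linarith)]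
    ring
  refine Tendsto.congr' (hA.mono fun ε h => h.symm) ?_
  have hKv : Kv M τ = (∫ s in Ioo (-1:ℝ) 1, φ s) + wfun M τ * Real.log ((1+τ)/(1-τ)) := rfl
  rw [hKv]
  exact hB.add_const _

noncomputable def hilbert' (g : ℝ → ℝ) (t : ℝ) : ℝ :=
  limUnder (nhdsWithin 0 (Set.Ioi 0))
    (fun ε : ℝ => (1 / Real.pi) * ∫ s in {s : ℝ | ε < |t - s|}, g s / (t - s))

lemma hilbert'_eq (M : ℕ) (hM : 1 ≤ M) {τ : ℝ} (hτ : τ ∈ Ioo (-1:ℝ) 1) :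
    hilbert' (gfun M) τ = (1 / Real.pi) * Kv M τ := by
  apply Tendsto.limUnder_eq
  exact (tendsto_pv M hM hτ).const_mul (1/Real.pi)

open Polynomial in
lemma iteratedDeriv_hilbert' (m' : ℕ) {t : ℝ} (ht : |t| < 1) :
    iteratedDeriv (2*m'+1) (hilbert' (gfun (m'+1))) t
      = (-1 : ℝ)^m' * ((2*m'+1).factorial : ℝ) := by
  have htI : t ∈ Ioo (-1:ℝ) 1 := by
    rw [mem_Ioo]; exact ⟨neg_lt_of_abs_lt ht, lt_of_abs_lt ht⟩
  have hev : hilbert' (gfun (m'+1)) =ᶠ[nhds t]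
      (fun τ => (C (1/Real.pi) * Pv (m'+1)).eval τ) := by
    filter_upwards [isOpen_Ioo.mem_nhds htI] with τ hτ
    rw [hilbert'_eq (m'+1) (by omega) hτ, Kv_eq_poly (m'+1) hτ]
    simp
  rw [Filter.EventuallyEq.iteratedDeriv_eq (2*m'+1) hev, iteratedDeriv_polyeval]
  rw [iterate_derivative_C_mul, iterate_derivative_Pv m']
  have hIv : Iv 0 = Real.pi := integral_wfun_zero
  rw [hIv]
  simp only [eval_mul, eval_C]
  field_simp

end AuxStmt13
section MainStmt13
open Set Real
/-- the kernel identity in even dimensions `n ≥ 4`, with the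
integral against `Φ^{(n-2)}` (`Φ = log|·|`) interpreted, as in the paper, as
`(2|Ax-Ay|)^{-(n-2)} π ∂_t^{n-3} H[(1-s²)_+^{(n-3)/2}](t)`. -/
theorem stmt_13 (n : ℕ) (hn : 4 ≤ n) (heven : Even n) (a : Fin n → ℝ)
    (ha : ∀ i, 0 < a i) (x y : EuclideanSpace ℝ (Fin n))
    (hxy : diagMul a x ≠ diagMul a y) (t : ℝ) (ht : |t| < 1) :
    (sphereVol (n - 2) / sphereVol (n - 1)) *
        ((2 * ‖diagMul a x - diagMul a y‖) ^ ((n : ℕ) - 2))⁻¹ * Real.pi *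
        iteratedDeriv (n - 3)
          (hilbert fun s : ℝ => (max 0 (1 - s ^ 2)) ^ (((n : ℝ) - 3) / 2)) t =
      (-1 : ℝ) ^ ((n - 2) / 2) *
        (Real.pi * sphereVol (n - 2) * (Nat.factorial (n - 2)) / 2 ^ (n - 2)) *
        fundSol n (diagMul a x) (diagMul a y) := by
  obtain ⟨k, hk⟩ := heven
  have hk2 : 2 ≤ k := by omega
  set m' : ℕ := k - 2 with hm'
  have hn3 : n - 3 = 2*m'+1 := by omega
  have hn2 : n - 2 = 2*m'+2 := by omega
  have hdiv : (n-2)/2 = m'+1 := by omega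
  -- identify the function with gfun (m'+1)
  have hfun : (fun s : ℝ => (max 0 (1 - s ^ 2)) ^ (((n : ℝ) - 3) / 2)) = gfun (m'+1) := by
    funext s
    rw [gfun]
    congr 1
    have hkr : (n:ℝ) = 2*(k:ℝ) := by rw [hk]; push_cast; ring
    have hm'r : ((m'+1 : ℕ):ℝ) = (k:ℝ) - 1 := by
      have : m' + 1 = k - 1 := by omega
      rw [this, Nat.cast_sub (by omega)]; norm_num
    rw [hm'r, hkr]; ring
  have hhil : hilbert = hilbert' := rfl
  rw [hfun, hhil, hn3, iteratedDeriv_hilbert' m' ht, ← hn3]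
  -- arithmetic
  set D : ℝ := ‖diagMul a x - diagMul a y‖ with hD
  have hDpos : 0 < D := by
    rw [hD, norm_pos_iff]
    exact sub_ne_zero.2 hxy
  rcases eq_or_ne (sphereVol (n-1)) 0 with hB | hB
  · rw [fundSol, hB]
    simp
  · rw [fundSol]
    have hze : ((2:ℤ) - n) = -((n - 2 : ℕ) : ℤ) := by omega
    rw [hze, zpow_neg, zpow_natCast]
    rw [hdiv, pow_succ]
    have hfac : ((n-2).factorial : ℝ) = ((n:ℝ) - 2) * ((n-3).factorial : ℝ) := by
      rw [show n-2 = (n-3)+1 by omega, Nat.factorial_succ]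
      push_cast [Nat.cast_sub (show 3 ≤ n by omega)]
      ring
    have h2n : ((2:ℝ) - n) ≠ 0 := by
      have : (4:ℝ) ≤ (n:ℝ) := by exact_mod_cast hn
      linarith
    rw [hfac, mul_pow]
    have h2p : ((2:ℝ)^(n-2)) ≠ 0 := by positivity
    have hDp : D^(n-2) ≠ 0 := by positivity
    field_simp
    have hDD : ‖diagMul a x - diagMul a y‖ = D := rfl
    rw [hDD]
    field_simp
    ring

end MainStmt13
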